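/- Let ν be a non-negative function on a finite set X that can be written as ν = ν₁ + ν₂ with ‖ν₁‖_∞ ≤ α and ‖ν₂‖₂ ≤ γ. Then every function h with 0 ≤ h ≤ ν pointwise satisfies ‖h‖₂ ≤ γ + (α‖h‖₁)^{1/2}. -/

import Mathlib

open Finset

/-- Lemma 5.5: if `ν = ν₁ + ν₂` is non-negative with `‖ν₁‖_∞ ≤ α` and `‖ν₂‖₂ ≤ γ`, then
every `h` with `0 ≤ h ≤ ν` satisfies `‖h‖₂ ≤ γ + (α‖h‖₁)^{1/2}` (norms with respect to the
averaging measure). -/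
theorem l2_bound_of_dominated_by_split_measure
    {X : Type*} [Fintype X] (ν ν₁ ν₂ h : X → ℝ) (α γ : ℝ)
    (hα : 0 ≤ α) (hγ : 0 ≤ γ)
    (hν : ∀ x, 0 ≤ ν x) (hsplit : ∀ x, ν x = ν₁ x + ν₂ x)
    (hν₁ : ∀ x, |ν₁ x| ≤ α)
    (hν₂ : Real.sqrt ((∑ x : X, ν₂ x ^ 2) / (Fintype.card X : ℝ)) ≤ γ)
    (hh : ∀ x, 0 ≤ h x ∧ h x ≤ ν x) :
    Real.sqrt ((∑ x : X, h x ^ 2) / (Fintype.card X : ℝ))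
      ≤ γ + Real.sqrt (α * ((∑ x : X, |h x|) / (Fintype.card X : ℝ))) := by
  set N : ℝ := (Fintype.card X : ℝ) with hNdef
  rcases eq_or_lt_of_le (Nat.cast_nonneg (Fintype.card X) : (0:ℝ) ≤ N) with hN | hN
  · rw [hNdef, ← hN]
    simp only [div_zero, Real.sqrt_zero]
    positivity
  set S2 : ℝ := ∑ x : X, h x ^ 2 with hS2
  set S1 : ℝ := ∑ x : X, |h x| with hS1
  set T2 : ℝ := ∑ x : X, ν₂ x ^ 2 with hT2
  have hS2nn : 0 ≤ S2 := Finset.sum_nonneg fun x _ => sq_nonneg _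
  have hS1nn : 0 ≤ S1 := Finset.sum_nonneg fun x _ => abs_nonneg _
  have hT2nn : 0 ≤ T2 := Finset.sum_nonneg fun x _ => sq_nonneg _
  have key : S2 ≤ α * S1 + ∑ x : X, h x * ν₂ x := by
    rw [hS2, hS1, Finset.mul_sum, ← Finset.sum_add_distrib]
    refine Finset.sum_le_sum fun x _ => ?_
    obtain ⟨hx0, hxν⟩ := hh x
    have habs : |h x| = h x := abs_of_nonneg hx0
    have h2 : h x * ν₁ x ≤ α * |h x| := by
      rw [habs]; nlinarith [abs_le.mp (hν₁ x)]
    nlinarith [hsplit x]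
  have cs : (∑ x : X, h x * ν₂ x) ^ 2 ≤ S2 * T2 :=
    Finset.sum_mul_sq_le_sq_mul_sq Finset.univ h ν₂
  have cs' : ∑ x : X, h x * ν₂ x ≤ Real.sqrt S2 * Real.sqrt T2 := by
    rw [← Real.sqrt_mul hS2nn]
    calc ∑ x : X, h x * ν₂ x ≤ |∑ x : X, h x * ν₂ x| := le_abs_self _
      _ = Real.sqrt ((∑ x : X, h x * ν₂ x) ^ 2) := (Real.sqrt_sq_eq_abs _).symm
      _ ≤ Real.sqrt (S2 * T2) := Real.sqrt_le_sqrt cs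
  set t : ℝ := Real.sqrt (S2 / N) with ht
  set b : ℝ := Real.sqrt (T2 / N) with hb
  set c : ℝ := α * (S1 / N) with hc
  have hcnn : 0 ≤ c := by positivity
  have htnn : 0 ≤ t := Real.sqrt_nonneg _
  have ht2 : t ^ 2 = S2 / N := Real.sq_sqrt (by positivity)
  have hbγ : b ≤ γ := hν₂
  have hbnn : 0 ≤ b := Real.sqrt_nonneg _
  have hst : Real.sqrt S2 = t * Real.sqrt N := by
    rw [ht, ← Real.sqrt_mul (by positivity : (0:ℝ) ≤ S2 / N),
      div_mul_cancel₀ _ hN.ne']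
  have hsb : Real.sqrt T2 = b * Real.sqrt N := by
    rw [hb, ← Real.sqrt_mul (by positivity : (0:ℝ) ≤ T2 / N),
      div_mul_cancel₀ _ hN.ne']
  have hNsq : Real.sqrt N * Real.sqrt N = N := Real.mul_self_sqrt (le_of_lt hN)
  have quad : t ^ 2 ≤ c + t * γ := by
    have h1 : S2 ≤ α * S1 + t * b * N := by
      calc S2 ≤ α * S1 + ∑ x : X, h x * ν₂ x := key
        _ ≤ α * S1 + Real.sqrt S2 * Real.sqrt T2 := by linarith
        _ = α * S1 + t * b * N := by
            rw [hst, hsb, show t * Real.sqrt N * (b * Real.sqrt N)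
              = t * b * (Real.sqrt N * Real.sqrt N) by ring, hNsq]
    have h2 : S2 / N ≤ (α * S1 + t * b * N) / N := by gcongr
    have h3 : (α * S1 + t * b * N) / N = c + t * b := by
      rw [hc]; field_simp; rw [add_div, mul_div_cancel_right₀ _ (hN.ne' : N ≠ 0)]
    rw [ht2]
    nlinarith [mul_le_mul_of_nonneg_left hbγ htnn]
  have hsc : Real.sqrt c ^ 2 = c := Real.sq_sqrt hcnn
  have hscnn : 0 ≤ Real.sqrt c := Real.sqrt_nonneg _
  show t ≤ γ + Real.sqrt c
  nlinarith [quad, hsc, mul_nonneg htnn hscnn, mul_nonneg hγ hscnn,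
    sq_nonneg (t - Real.sqrt c)]
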